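/- Let ∇ ⊂ ℝ⁴ be defined by 0 ≤ x ≤ 1, 0 ≤ y ≤ 1, 0 ≤ z ≤ 1, w ≥ 0, y+z-x ≥ 0, 1+x-y-z-w ≥ 0. For every positive integer n, the number of lattice points in n∇ equals C(n+4,4) + 4·C(n+3,4) + 3·C(n+2,4) = (8n⁴ + 40n³ + 76n² + 68n + 24)/24. -/
import Mathlib

open Pointwise

def nabla : Set (ℝ × ℝ × ℝ × ℝ) :=
  {p : ℝ × ℝ × ℝ × ℝ |
    0 ≤ p.1 ∧
    p.1 ≤ 1 ∧
    0 ≤ p.2.1 ∧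
    p.2.1 ≤ 1 ∧
    0 ≤ p.2.2.1 ∧
    p.2.2.1 ≤ 1 ∧
    0 ≤ p.2.2.2 ∧
    0 ≤ p.2.1 + p.2.2.1 - p.1 ∧
    0 ≤ 1 + p.1 - p.2.1 - p.2.2.1 - p.2.2.2}

namespace Stmt18Aux

open Finset

def G (k : ℕ) : ℤ := ∑ i ∈ range k, (i : ℤ)
def S2 (k : ℕ) : ℤ := ∑ i ∈ range k, (i : ℤ) ^ 2
def SG (k : ℕ) : ℤ := ∑ i ∈ range k, G i
def SSG (k : ℕ) : ℤ := ∑ i ∈ range k, SG i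
def SS2 (k : ℕ) : ℤ := ∑ i ∈ range k, S2 i

lemma two_G (k : ℕ) : 2 * G k = (k : ℤ) * (k - 1) := by
  induction k with
  | zero => simp [G]
  | succ m ih =>
    have : G (m + 1) = G m + m := by simp [G, sum_range_succ]
    rw [this]; push_cast; push_cast at ih; linear_combination ih

lemma six_S2 (k : ℕ) : 6 * S2 k = (k : ℤ) * (k - 1) * (2 * k - 1) := by
  induction k with
  | zero => simp [S2]
  | succ m ih =>
    have : S2 (m + 1) = S2 m + (m : ℤ) ^ 2 := by simp [S2, sum_range_succ]
    rw [this]; push_cast; push_cast at ih; linear_combination ih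

lemma six_SG (k : ℕ) : 6 * SG k = (k : ℤ) * (k - 1) * (k - 2) := by
  induction k with
  | zero => simp [SG]
  | succ m ih =>
    have : SG (m + 1) = SG m + G m := by simp [SG, sum_range_succ]
    rw [this]; push_cast; push_cast at ih; linear_combination ih + 3 * two_G m

lemma tf_SSG (k : ℕ) : 24 * SSG k = (k : ℤ) * (k - 1) * (k - 2) * (k - 3) := by
  induction k with
  | zero => simp [SSG]
  | succ m ih =>
    have : SSG (m + 1) = SSG m + SG m := by simp [SSG, sum_range_succ]
    rw [this]; push_cast; push_cast at ih; linear_combination ih + 4 * six_SG m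

lemma twelve_SS2 (k : ℕ) : 12 * SS2 k = (k : ℤ) * (k - 1) ^ 2 * (k - 2) := by
  induction k with
  | zero => simp [SS2]
  | succ m ih =>
    have : SS2 (m + 1) = SS2 m + S2 m := by simp [SS2, sum_range_succ]
    rw [this]; push_cast; push_cast at ih; linear_combination ih + 2 * six_S2 m

lemma ch2 (m : ℕ) : (Nat.choose m 2 : ℤ) * 2 = (m : ℤ) * (m - 1) := by
  induction m with
  | zero => simp
  | succ k ih =>
    rw [Nat.choose_succ_succ]
    push_cast [Nat.choose_one_right]; push_cast at ih; linear_combination ih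

lemma ch3 (m : ℕ) : (Nat.choose m 3 : ℤ) * 6 = (m : ℤ) * (m - 1) * (m - 2) := by
  induction m with
  | zero => simp
  | succ k ih =>
    rw [Nat.choose_succ_succ]
    push_cast; push_cast at ih; linear_combination ih + 3 * ch2 k

lemma ch4 (m : ℕ) : (Nat.choose m 4 : ℤ) * 24 = (m : ℤ) * (m - 1) * (m - 2) * (m - 3) := by
  induction m with
  | zero => simp
  | succ k ih =>
    rw [Nat.choose_succ_succ]
    push_cast; push_cast at ih; linear_combination ih + 4 * ch3 k

def cnt (n : ℕ) : Finset (ℕ × ℕ × ℕ × ℕ) :=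
  (range (n+1) ×ˢ range (n+1) ×ˢ range (n+1) ×ˢ range (2*n+1)).filter
    (fun p => p.1 ≤ p.2.1 + p.2.2.1 ∧ p.2.2.2 + p.2.1 + p.2.2.1 ≤ n + p.1)

lemma sumCsub (M : ℕ) (C : ℤ) : ∑ i ∈ range M, (C - (i : ℤ)) = M * C - G M := by
  rw [Finset.sum_sub_distrib, Finset.sum_const, card_range, nsmul_eq_mul, G]

lemma innerd (n a b c : ℕ) :
    (∑ d ∈ range (2*n+1), if a ≤ b + c ∧ d + b + c ≤ n + a then (1 : ℤ) else 0)
      = if a ≤ b + c ∧ b + c ≤ n + a then ((n : ℤ) + a + 1 - b - c) else 0 := by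
  rw [Finset.sum_boole]
  split_ifs with h
  · have e : (range (2*n+1)).filter (fun d => a ≤ b + c ∧ d + b + c ≤ n + a)
        = range (n + a + 1 - (b + c)) := by
      ext d; simp only [Finset.mem_filter, Finset.mem_range]; omega
    rw [e, card_range]; omega
  · have e : (range (2*n+1)).filter (fun d => a ≤ b + c ∧ d + b + c ≤ n + a) = ∅ := by
      ext d; simp only [Finset.mem_filter, Finset.mem_range, Finset.notMem_empty, iff_false]
      omega
    rw [e]; simp

lemma innerc (n a b : ℕ) (ha : a ≤ n) (hb : b ≤ n) :
    (∑ c ∈ range (n+1), if a ≤ b + c ∧ b + c ≤ n + a then ((n : ℤ) + a + 1 - b - c) else 0)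
      = if b ≤ a then (((n : ℤ)+1) * ((n+1-(a-b) : ℕ) : ℤ) - G (n+1-(a-b)))
        else (((n+a+1-b : ℕ) : ℤ) ^ 2 - G (n+a+1-b)) := by
  split_ifs with hba
  · have e1 : ∀ c ∈ range (n+1),
        (if a ≤ b + c ∧ b + c ≤ n + a then ((n : ℤ) + a + 1 - b - c) else 0)
          = (if a - b ≤ c then ((n : ℤ) + a + 1 - b - c) else 0) := by
      intro c hc; simp only [mem_range] at hc
      by_cases hcb : a - b ≤ c
      · rw [if_pos hcb, if_pos (by omega)]
      · rw [if_neg hcb, if_neg (by omega)]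
    rw [Finset.sum_congr rfl e1, ← Finset.sum_filter]
    have e2 : (range (n+1)).filter (fun c => a - b ≤ c) = Ico (a-b) (n+1) := by
      ext c; simp only [mem_filter, mem_range, mem_Ico]; omega
    rw [e2, Finset.sum_Ico_eq_sum_range]
    have e3 : ∀ i ∈ range (n+1-(a-b)),
        ((n : ℤ) + a + 1 - b - (((a-b) + i : ℕ) : ℤ)) = ((n : ℤ) + 1) - (i : ℤ) := by
      intro i _; push_cast; omega
    rw [Finset.sum_congr rfl e3, sumCsub]
    ring
  · have e1 : ∀ c ∈ range (n+1),
        (if a ≤ b + c ∧ b + c ≤ n + a then ((n : ℤ) + a + 1 - b - c) else 0)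
          = (if c < n+a+1-b then ((n : ℤ) + a + 1 - b - c) else 0) := by
      intro c hc; simp only [mem_range] at hc
      by_cases hcb : c < n+a+1-b
      · rw [if_pos hcb, if_pos (by omega)]
      · rw [if_neg hcb, if_neg (by omega)]
    rw [Finset.sum_congr rfl e1, ← Finset.sum_filter]
    have e2 : (range (n+1)).filter (fun c => c < n+a+1-b) = range (n+a+1-b) := by
      ext c; simp only [mem_filter, mem_range]; omega
    rw [e2]
    have e3 : ∀ c ∈ range (n+a+1-b),
        ((n : ℤ) + a + 1 - b - (c : ℤ)) = (((n+a+1-b : ℕ) : ℤ)) - (c : ℤ) := by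
      intro c _; push_cast; omega
    rw [Finset.sum_congr rfl e3, sumCsub]
    ring

lemma innerb (n a : ℕ) (ha : a ≤ n) :
    (∑ b ∈ range (n+1),
        if b ≤ a then (((n : ℤ)+1) * ((n+1-(a-b) : ℕ) : ℤ) - G (n+1-(a-b)))
        else (((n+a+1-b : ℕ) : ℤ) ^ 2 - G (n+a+1-b)))
      = (∑ m ∈ Ico (n+1-a) (n+2), (((n : ℤ)+1) * (m : ℤ) - G m))
        + (∑ m ∈ Ico (a+1) (n+1), ((m : ℤ) ^ 2 - G m)) := by
  rw [Finset.sum_ite]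
  have e1 : (range (n+1)).filter (fun b => b ≤ a) = range (a+1) := by
    ext b; simp only [mem_filter, mem_range]; omega
  have e2 : (range (n+1)).filter (fun b => ¬ b ≤ a) = Ico (a+1) (n+1) := by
    ext b; simp only [mem_filter, mem_range, mem_Ico]; omega
  rw [e1, e2]
  congr 1
  · rw [Finset.sum_Ico_eq_sum_range]
    have hc : n + 2 - (n+1-a) = a + 1 := by omega
    rw [hc]
    apply Finset.sum_congr rfl
    intro b hb; simp only [mem_range] at hb
    have h1 : n + 1 - (a - b) = (n+1-a) + b := by omega
    rw [h1]
  · apply Finset.sum_nbij' (fun b => n+a+1-b) (fun m => n+a+1-m)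
    · intro b hb; simp only [mem_Ico] at *; omega
    · intro m hm; simp only [mem_Ico] at *; omega
    · intro b hb; simp only [mem_Ico] at hb; omega
    · intro m hm; simp only [mem_Ico] at hm; omega
    · intro b hb; rfl

lemma shiftsum (f : ℕ → ℤ) (n : ℕ) :
    ∑ a ∈ range (n+1), f (a+1) = (∑ m ∈ range (n+2), f m) - f 0 := by
  rw [Finset.sum_range_succ' f (n+1)]; ring

lemma reflsum (f : ℕ → ℤ) (n : ℕ) :
    ∑ a ∈ range (n+1), f (n+1-a) = ∑ a ∈ range (n+1), f (a+1) := by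
  rw [← Finset.sum_range_reflect (fun a => f (a+1)) (n+1)]
  apply Finset.sum_congr rfl
  intro i hi; simp only [mem_range] at hi; congr 1; omega

lemma sumF1 (n k : ℕ) :
    ∑ m ∈ range k, (((n : ℤ)+1) * (m : ℤ) - G m) = ((n : ℤ)+1) * G k - SG k := by
  rw [Finset.sum_sub_distrib, ← Finset.mul_sum, G, SG]

lemma sumF2 (k : ℕ) :
    ∑ m ∈ range k, ((m : ℤ) ^ 2 - G m) = S2 k - SG k := by
  rw [Finset.sum_sub_distrib, S2, SG]

lemma suma (n : ℕ) :
    (∑ a ∈ range (n+1),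
      ((∑ m ∈ Ico (n+1-a) (n+2), (((n : ℤ)+1) * (m : ℤ) - G m))
        + (∑ m ∈ Ico (a+1) (n+1), ((m : ℤ) ^ 2 - G m))))
    = ((n:ℤ)+1)^2 * G (n+2) - 2*((n:ℤ)+1) * SG (n+2) + 2 * SSG (n+2)
      + ((n:ℤ)+1) * S2 (n+1) - SS2 (n+2) - ((n:ℤ)+1) * SG (n+1) := by
  have key : ∀ a ∈ range (n+1),
      ((∑ m ∈ Ico (n+1-a) (n+2), (((n : ℤ)+1) * (m : ℤ) - G m))
        + (∑ m ∈ Ico (a+1) (n+1), ((m : ℤ) ^ 2 - G m)))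
      = (((n : ℤ)+1) * G (n+2) - SG (n+2) + S2 (n+1) - SG (n+1))
        - (((n : ℤ)+1) * G (n+1-a) - SG (n+1-a)) - (S2 (a+1) - SG (a+1)) := by
    intro a ha; simp only [mem_range] at ha
    rw [Finset.sum_Ico_eq_sub _ (by omega : n+1-a ≤ n+2),
        Finset.sum_Ico_eq_sub _ (by omega : a+1 ≤ n+1), sumF1, sumF1, sumF2, sumF2]
    ring
  rw [Finset.sum_congr rfl key]
  simp only [Finset.sum_sub_distrib, Finset.sum_const, card_range, nsmul_eq_mul,
    ← Finset.mul_sum]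
  rw [reflsum (fun m => G m) n, reflsum (fun m => SG m) n,
      shiftsum (fun m => G m) n, shiftsum (fun m => SG m) n,
      shiftsum (fun m => S2 m) n]
  have hG0 : G 0 = 0 := by simp [G]
  have hSG0 : SG 0 = 0 := by simp [SG]
  have hS20 : S2 0 = 0 := by simp [S2]
  have hSGdef : ∑ m ∈ range (n+2), G m = SG (n+2) := rfl
  have hSSGdef : ∑ m ∈ range (n+2), SG m = SSG (n+2) := rfl
  have hSS2def : ∑ m ∈ range (n+2), S2 m = SS2 (n+2) := rfl
  rw [hSGdef, hSSGdef, hSS2def, hG0, hSG0, hS20]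
  push_cast
  ring

lemma card_cnt (n : ℕ) : ((cnt n).card : ℤ) * 24
    = 8*(n:ℤ)^4 + 40*(n:ℤ)^3 + 76*(n:ℤ)^2 + 68*(n:ℤ) + 24 := by
  have h0 : ((cnt n).card : ℤ)
      = ∑ a ∈ range (n+1), ∑ b ∈ range (n+1), ∑ c ∈ range (n+1), ∑ d ∈ range (2*n+1),
          (if a ≤ b + c ∧ d + b + c ≤ n + a then (1 : ℤ) else 0) := by
    rw [cnt, ← Finset.sum_boole, Finset.sum_product]
    apply Finset.sum_congr rfl; intro a _
    rw [Finset.sum_product]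
    apply Finset.sum_congr rfl; intro b _
    rw [Finset.sum_product]
  have h1 : ((cnt n).card : ℤ)
      = ∑ a ∈ range (n+1),
          ((∑ m ∈ Ico (n+1-a) (n+2), (((n : ℤ)+1) * (m : ℤ) - G m))
            + (∑ m ∈ Ico (a+1) (n+1), ((m : ℤ) ^ 2 - G m))) := by
    rw [h0]
    apply Finset.sum_congr rfl; intro a ha; simp only [mem_range] at ha
    rw [← innerb n a (by omega)]
    apply Finset.sum_congr rfl; intro b hb; simp only [mem_range] at hb
    rw [← innerc n a b (by omega) (by omega)]
    apply Finset.sum_congr rfl; intro c _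
    rw [innerd n a b c]
  have hF := h1.trans (suma n)
  have hGv := two_G (n+2)
  have hSG2 := six_SG (n+2)
  have hSSG := tf_SSG (n+2)
  have hS2 := six_S2 (n+1)
  have hSG1 := six_SG (n+1)
  have hSS2 := twelve_SS2 (n+2)
  push_cast at hGv hSG2 hSSG hS2 hSG1 hSS2
  linear_combination 24 * hF + 12*((n:ℤ)+1)^2 * hGv - 8*((n:ℤ)+1) * hSG2 + 2 * hSSG
    + 4*((n:ℤ)+1) * hS2 - 2 * hSS2 - 4*((n:ℤ)+1) * hSG1

lemma mem_scaled (n : ℕ) (hn : 0 < n) (x y z w : ℝ) :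
    (x, y, z, w) ∈ (n : ℝ) • nabla ↔
      (0 ≤ x ∧ x ≤ n ∧ 0 ≤ y ∧ y ≤ n ∧ 0 ≤ z ∧ z ≤ n ∧ 0 ≤ w ∧
        x ≤ y + z ∧ w + y + z ≤ n + x) := by
  have hn' : (0 : ℝ) < n := by exact_mod_cast hn
  constructor
  · rintro ⟨⟨p1, p2, p3, p4⟩, hp, hv⟩
    obtain ⟨h1, h2, h3, h4, h5, h6, h7, h8, h9⟩ := hp
    have hv' : ((n : ℝ) * p1, (n : ℝ) * p2, (n : ℝ) * p3, (n : ℝ) * p4) = (x, y, z, w) := by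
      simpa [Prod.smul_mk, smul_eq_mul] using hv
    have e : (n : ℝ) * p1 = x ∧ (n : ℝ) * p2 = y ∧ (n : ℝ) * p3 = z ∧ (n : ℝ) * p4 = w := by
      simpa [Prod.ext_iff] using hv'
    obtain ⟨e1, e2, e3, e4⟩ := e
    subst e1 e2 e3 e4
    refine ⟨?_, ?_, ?_, ?_, ?_, ?_, ?_, ?_, ?_⟩ <;> nlinarith
  · rintro ⟨h1, h2, h3, h4, h5, h6, h7, h8, h9⟩
    refine ⟨(x / n, y / n, z / n, w / n), ⟨?_, ?_, ?_, ?_, ?_, ?_, ?_, ?_, ?_⟩, ?_⟩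
    · exact div_nonneg h1 hn'.le
    · exact (div_le_one hn').mpr h2
    · exact div_nonneg h3 hn'.le
    · exact (div_le_one hn').mpr h4
    · exact div_nonneg h5 hn'.le
    · exact (div_le_one hn').mpr h6
    · exact div_nonneg h7 hn'.le
    · have h : y / n + z / n - x / n = (y + z - x) / n := by ring
      rw [h]; exact div_nonneg (by linarith) hn'.le
    · have h : 1 + x / n - y / n - z / n - w / n = (n + x - y - z - w) / n := by
        field_simp
      rw [h]; exact div_nonneg (by linarith) hn'.le
    · show ((n : ℝ) * (x / n), (n : ℝ) * (y / n), (n : ℝ) * (z / n), (n : ℝ) * (w / n))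
          = (x, y, z, w)
      have : ∀ u : ℝ, (n : ℝ) * (u / n) = u := fun u => by field_simp
      rw [this, this, this, this]

lemma set_eq (n : ℕ) (hn : 0 < n) :
    {v : ℤ × ℤ × ℤ × ℤ |
        (((v.1 : ℝ), (v.2.1 : ℝ), (v.2.2.1 : ℝ), (v.2.2.2 : ℝ)) : ℝ × ℝ × ℝ × ℝ)
          ∈ (n : ℝ) • nabla}
      = ↑((cnt n).image
          (fun p : ℕ × ℕ × ℕ × ℕ => ((p.1 : ℤ), (p.2.1 : ℤ), (p.2.2.1 : ℤ), (p.2.2.2 : ℤ)))) := by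
  ext ⟨x, y, z, w⟩
  simp only [Set.mem_setOf_eq, mem_scaled n hn, Finset.coe_image, Set.mem_image,
    Finset.mem_coe, cnt, Finset.mem_filter, Finset.mem_product, Finset.mem_range,
    Prod.ext_iff]
  constructor
  · intro h
    obtain ⟨h1, h2, h3, h4, h5, h6, h7, h8, h9⟩ :
        0 ≤ x ∧ x ≤ (n : ℤ) ∧ 0 ≤ y ∧ y ≤ (n : ℤ) ∧ 0 ≤ z ∧ z ≤ (n : ℤ) ∧ 0 ≤ w ∧
          x ≤ y + z ∧ w + y + z ≤ (n : ℤ) + x := by exact_mod_cast h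
    refine ⟨(x.toNat, y.toNat, z.toNat, w.toNat), ⟨⟨?_, ?_, ?_, ?_⟩, ?_, ?_⟩, ?_, ?_, ?_, ?_⟩ <;>
      simp only [] <;> omega
  · rintro ⟨⟨a, b, c, d⟩, ⟨⟨ha, hb, hc, hd⟩, g1, g2⟩, e1, e2, e3, e4⟩
    simp only [] at *
    have hZ : 0 ≤ x ∧ x ≤ (n : ℤ) ∧ 0 ≤ y ∧ y ≤ (n : ℤ) ∧ 0 ≤ z ∧ z ≤ (n : ℤ) ∧ 0 ≤ w ∧
        x ≤ y + z ∧ w + y + z ≤ (n : ℤ) + x := by omega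
    exact_mod_cast hZ

end Stmt18Aux

theorem stmt18 (n : ℕ) (hn : 0 < n) :
    {v : ℤ × ℤ × ℤ × ℤ | (((v.1 : ℝ), (v.2.1 : ℝ), (v.2.2.1 : ℝ), (v.2.2.2 : ℝ)) : ℝ × ℝ × ℝ × ℝ) ∈ (n : ℝ) • nabla}.ncard
        = Nat.choose (n + 4) 4 + 4 * Nat.choose (n + 3) 4 + 3 * Nat.choose (n + 2) 4 ∧
      ((Nat.choose (n + 4) 4 + 4 * Nat.choose (n + 3) 4 + 3 * Nat.choose (n + 2) 4 : ℚ))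
        = (8 * (n : ℚ) ^ 4 + 40 * (n : ℚ) ^ 3 + 76 * (n : ℚ) ^ 2 + 68 * (n : ℚ) ^ 1 + 24) / 24 := by
  have hb : ((Nat.choose (n+4) 4 + 4 * Nat.choose (n+3) 4 + 3 * Nat.choose (n+2) 4 : ℕ) : ℤ) * 24
      = 8*(n:ℤ)^4 + 40*(n:ℤ)^3 + 76*(n:ℤ)^2 + 68*(n:ℤ) + 24 := by
    have c1 := Stmt18Aux.ch4 (n+4)
    have c2 := Stmt18Aux.ch4 (n+3)
    have c3 := Stmt18Aux.ch4 (n+2)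
    push_cast at c1 c2 c3 ⊢
    linear_combination c1 + 4*c2 + 3*c3
  constructor
  · have hinj : Function.Injective
        (fun p : ℕ × ℕ × ℕ × ℕ => ((p.1 : ℤ), (p.2.1 : ℤ), (p.2.2.1 : ℤ), (p.2.2.2 : ℤ))) := by
      rintro ⟨a, b, c, d⟩ ⟨a', b', c', d'⟩ h
      simp only [Prod.mk.injEq] at h ⊢
      exact_mod_cast h
    rw [Stmt18Aux.set_eq n hn, Set.ncard_coe_finset,
      Finset.card_image_of_injective _ hinj]
    have hc := Stmt18Aux.card_cnt n
    have h24 := hc.trans hb.symm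
    have hfin : (((Stmt18Aux.cnt n).card : ℕ) : ℤ)
        = ((Nat.choose (n+4) 4 + 4 * Nat.choose (n+3) 4 + 3 * Nat.choose (n+2) 4 : ℕ) : ℤ) := by
      omega
    exact_mod_cast hfin
  · have hbq : ((Nat.choose (n+4) 4 + 4 * Nat.choose (n+3) 4 + 3 * Nat.choose (n+2) 4 : ℕ) : ℚ) * 24
        = 8*(n:ℚ)^4 + 40*(n:ℚ)^3 + 76*(n:ℚ)^2 + 68*(n:ℚ) + 24 := by
      exact_mod_cast hb
    rw [eq_div_iff (by norm_num : (24:ℚ) ≠ 0)]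
    push_cast at hbq ⊢
    linear_combination hbq
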